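/- (Theorem 1, CCRB for maximal support.) Let A be an m×n real matrix, S ⊆ {1,…,n} with |S| = s ≥ 1, and suppose the columns of A indexed by S are linearly independent (so that A_Sᵀ A_S is invertible). Let x ∈ ℝⁿ with supp(x) = S, let σₑ ≥ 0, σₙ ≥ 0 with σ_x² := σₑ²‖x‖₂² + σₙ² > 0, and set J = (1/σ_x²)·[AᵀA + 2mσₑ⁴·x xᵀ/σ_x²]. Let V be the n×s matrix whose columns are the standard basis vectors e_i, i ∈ S. Then VᵀJV is invertible and tr((VᵀJV)⁻¹) = σ_x²·[ tr((A_SᵀA_S)⁻¹) − 2mσₑ⁴·‖(A_SᵀA_S)⁻¹ x_S‖₂² / (σ_x² + 2mσₑ⁴·x_Sᵀ(A인_SᵀA_S)⁻¹ x_S) ], where A_S denotes the m×s submatrix of A with columns indexed by S and x_S ∈ ℝˢ the subvector of x indexed by S. -/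

import Mathlib

open Matrix

variable {ι : Type*} [Fintype ι] [DecidableEq ι]

lemma vmv_mul_mul (u : ι → ℝ) (M : Matrix ι ι ℝ) :
    vecMulVec u u * M * vecMulVec u u = (u ⬝ᵥ M *ᵥ u) • vecMulVec u u := by
  ext i j
  simp only [mul_apply, vecMulVec_apply, Matrix.smul_apply, dotProduct, mulVec, smul_eq_mul,
    Finset.sum_mul, Finset.mul_sum]
  rw [Finset.sum_comm]
  refine Finset.sum_congr rfl fun k _ => Finset.sum_congr rfl fun l _ => by ring

lemma sm_inv (B : Matrix ι ι ℝ) (hB : B.PosDef) (u : ι → ℝ) (c : ℝ) (hc : 0 ≤ c) :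
    (B + c • vecMulVec u u) *
      (B⁻¹ - (c / (1 + c * (u ⬝ᵥ B⁻¹ *ᵥ u))) • (B⁻¹ * vecMulVec u u * B⁻¹)) = 1 := by
  have hq : 0 ≤ u ⬝ᵥ B⁻¹ *ᵥ u := by
    have := hB.inv.posSemidef.dotProduct_mulVec_nonneg u
    simpa using this
  set q := u ⬝ᵥ B⁻¹ *ᵥ u with hqdef
  have hd : (0:ℝ) < 1 + c * q := by positivity
  have hdet : IsUnit B.det := isUnit_iff_ne_zero.mpr hB.det_pos.ne'
  have hBB : B * B⁻¹ = 1 := mul_nonsing_inv B hdet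
  have key : vecMulVec u u * B⁻¹ * vecMulVec u u = q • vecMulVec u u := vmv_mul_mul u B⁻¹
  have key : vecMulVec u u * B⁻¹ * vecMulVec u u = q • vecMulVec u u := vmv_mul_mul u B⁻¹
  have hd' : (1 + c * q) ≠ 0 := hd.ne'
  simp only [add_mul, mul_sub, mul_smul_comm, smul_mul_assoc, smul_smul, ← mul_assoc, hBB,
    one_mul]
  rw [key, smul_mul_assoc]
  match_scalars <;> first | (field_simp; ring) | field_simp

lemma trace_sym_vmv (N : Matrix ι ι ℝ) (hN : Nᵀ = N) (u : ι → ℝ) :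
    (N * vecMulVec u u * N).trace = ∑ j, (N *ᵥ u) j ^ 2 := by
  have h : ∀ l i, N l i = N i l := fun l i => ((congrFun (congrFun hN l) i).symm.trans (transpose_apply N l i))
  simp only [trace, diag_apply, mul_apply, vecMulVec_apply, mulVec, dotProduct, pow_two,
    Finset.sum_mul, Finset.mul_sum]
  refine Finset.sum_congr rfl fun i _ => ?_
  rw [Finset.sum_comm]
  refine Finset.sum_congr rfl fun k _ => Finset.sum_congr rfl fun l _ => by rw [h l i]; ring

/-- Theorem 1 (CCRB for maximal support). Let `A` be `m×n`, `S ⊆ {1,…,n}` with `|S| = s ≥ 1`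
and linearly independent columns `A_S`, `x` a parameter with `supp(x) = S`,
`σ_x² = σₑ²‖x‖₂² + σₙ² > 0`, and `J = (1/σ_x²)(AᵀA + 2mσₑ⁴ x xᵀ/σ_x²)` the Fisher
information matrix.  With `V` the `n×s` matrix of standard basis columns `e_i`, `i ∈ S`,
the matrix `VᵀJV` is invertible and
`tr((VᵀJV)⁻¹) = σ_x² [tr((A_SᵀA_S)⁻¹) − 2mσₑ⁴‖(A_SᵀA_S)⁻¹x_S‖₂²
  / (σ_x² + 2mσₑ⁴ x_Sᵀ(A_SᵀA_S)⁻¹x_S)]`. -/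
theorem ccrb_maximal_support
    {m n : ℕ} (A : Matrix (Fin m) (Fin n) ℝ) (S : Finset (Fin n)) (s : ℕ)
    (hcard : S.card = s) (hs : 1 ≤ s)
    (hindep : LinearIndependent ℝ (fun j : S => fun k : Fin m => A k j))
    (x : Fin n → ℝ) (hsupp : ∀ i, x i ≠ 0 ↔ i ∈ S)
    (σe σn : ℝ) (hσe : 0 ≤ σe) (hσn : 0 ≤ σn)
    (σx2 : ℝ) (hσx2 : σx2 = σe ^ 2 * ∑ i, x i ^ 2 + σn ^ 2) (hσx2pos : 0 < σx2)
    (J : Matrix (Fin n) (Fin n) ℝ)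
    (hJ : J = (1 / σx2) • (Aᵀ * A + (2 * m * σe ^ 4 / σx2) • vecMulVec x x))
    (V : Matrix (Fin n) S ℝ)
    (hV : V = fun i (j : S) => if i = (j : Fin n) then (1 : ℝ) else 0)
    (AS : Matrix (Fin m) S ℝ) (hAS : AS = fun k (j : S) => A k j)
    (xS : S → ℝ) (hxS : xS = fun j : S => x j) :
    IsUnit (Vᵀ * J * V) ∧
    ((Vᵀ * J * V)⁻¹).trace
      = σx2 * (((ASᵀ * AS)⁻¹).trace
          - 2 * m * σe ^ 4 * (∑ j, (((ASᵀ * AS)⁻¹ *ᵥ xS) j) ^ 2)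
            / (σx2 + 2 * m * σe ^ 4 * (xS ⬝ᵥ (ASᵀ * AS)⁻¹ *ᵥ xS))) := by
  have hσne : σx2 ≠ 0 := hσx2pos.ne'
  set c : ℝ := 2 * m * σe ^ 4 / σx2 with hc
  have hcnn : 0 ≤ c := by positivity
  -- AS mulVec injectivity
  have hASinj : ∀ v : S → ℝ, AS *ᵥ v = 0 → v = 0 := by
    intro v hv
    have h0 : ∑ j : S, v j • (fun k : Fin m => A k j) = 0 := by
      funext k
      have := congrFun hv k
      simpa [hAS, mulVec, dotProduct, mul_comm] using this
    have := Fintype.linearIndependent_iff.mp hindep v h0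
    funext j; exact this j
  -- positive definiteness of B = ASᵀ AS
  have hPD : (ASᵀ * AS).PosDef := by
    refine PosDef.of_dotProduct_mulVec_pos ?_ ?_
    · have := isHermitian_conjTranspose_mul_self AS
      rwa [conjTranspose_eq_transpose_of_trivial] at this
    · intro v hv
      have h1 : star v ⬝ᵥ (ASᵀ * AS) *ᵥ v = (AS *ᵥ v) ⬝ᵥ (AS *ᵥ v) := by
        rw [star_trivial, ← mulVec_mulVec, dotProduct_mulVec, vecMul_transpose]
      rw [h1]
      have hne : AS *ᵥ v ≠ 0 := fun h => hv (hASinj v h)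
      have : (AS *ᵥ v) ⬝ᵥ (AS *ᵥ v) ≠ 0 := fun h => hne (dotProduct_self_eq_zero.mp h)
      have hnn : 0 ≤ (AS *ᵥ v) ⬝ᵥ (AS *ᵥ v) :=
        Finset.sum_nonneg fun i _ => mul_self_nonneg _
      exact lt_of_le_of_ne hnn (Ne.symm this)
  set B : Matrix S S ℝ := ASᵀ * AS with hBdef
  set q : ℝ := xS ⬝ᵥ B⁻¹ *ᵥ xS with hq
  have hqnn : 0 ≤ q := by
    have := hPD.inv.posSemidef.dotProduct_mulVec_nonneg xS
    simpa using this
  have hd : (0:ℝ) < 1 + c * q := by positivity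
  have hsm := sm_inv B hPD xS c hcnn
  -- V picks out the S-columns
  have hVJV : Vᵀ * J * V = (1 / σx2) • (B + c • vecMulVec xS xS) := by
    ext i j
    simp only [hBdef, mul_apply, transpose_apply]
    subst hJ hV hAS hxS
    simp only [hBdef, mul_apply, vecMulVec_apply, transpose_apply, Matrix.smul_apply, Matrix.add_apply,
      dotProduct, Finset.mul_sum, Finset.sum_mul, mul_ite, ite_mul, mul_one, mul_zero,
      one_mul, zero_mul, Finset.sum_ite_eq, Finset.sum_ite_eq', Finset.mem_univ, if_true,
      smul_eq_mul]
    rfl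
  set M : Matrix S S ℝ :=
    B⁻¹ - (c / (1 + c * q)) • (B⁻¹ * vecMulVec xS xS * B⁻¹) with hM
  have hprod : (Vᵀ * J * V) * (σx2 • M) = 1 := by
    rw [hVJV, smul_mul_smul_comm, one_div, inv_mul_cancel₀ hσne, one_smul, hM, hsm]
  refine ⟨(isUnit_iff_isUnit_det _).mpr (isUnit_det_of_right_inverse hprod), ?_⟩
  rw [inv_eq_right_inv hprod]
  have hBsymm : Bᵀ = B := by
    have h := hPD.1.eq
    rwa [conjTranspose_eq_transpose_of_trivial] at h
  have hBinvsymm : (B⁻¹)ᵀ = B⁻¹ := by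
    rw [transpose_nonsing_inv, hBsymm]
  rw [hM, trace_smul, trace_sub, trace_smul, trace_sym_vmv B⁻¹ hBinvsymm xS]
  have hdenom : σx2 + 2 * m * σe ^ 4 * q = σx2 * (1 + c * q) := by
    rw [hc]; field_simp
  have hdpos : (0:ℝ) < σx2 + 2 * m * σe ^ 4 * q := by
    rw [hdenom]; positivity
  rw [smul_eq_mul, smul_eq_mul]
  rw [hc]
  field_simp
  try ring
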